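/- Let p be a prime and let R be a discrete valuation ring of characteristic p with maximal ideal 𝔪, and let m ≥ 1 be an integer. Then the p-th power map u ↦ u^p induces a group isomorphism from the quotient group (1+𝔪)/(1+𝔪^{⌈m/p⌉}) onto the image of the p-th power endomorphism of the group (1+𝔪)/(1+𝔪^m), i.e., onto the subgroup of classes of p-th powers in (1+𝔪)/(1+𝔪^m). -/

import Mathlib

/-- The subgroup `1 + I` of units, for an ideal `I`. -/
def unitSubgroup {R : Type*} [CommRing R] (I : Ideal R) : Subgroup Rˣ where
  carrier := {u | (u : R) - 1 ∈ I}
  one_mem' := by simp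
  mul_mem' {a b} ha hb := by
    have h : ((a * b : Rˣ) : R) - 1 = ((a : R) - 1) * (b : R) + ((b : R) - 1) := by
      push_cast; ring
    show ((a * b : Rˣ) : R) - 1 ∈ I
    rw [h]
    exact I.add_mem (I.mul_mem_right _ ha) hb
  inv_mem' {a} ha := by
    have h1 : (a : R) * ((a⁻¹ : Rˣ) : R) = 1 := a.mul_inv
    have h : ((a⁻¹ : Rˣ) : R) - 1 = -(((a : R) - 1) * ((a⁻¹ : Rˣ) : R)) := by
      linear_combination h1
    show ((a⁻¹ : Rˣ) : R) - 1 ∈ I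
    rw [h]
    exact I.neg_mem (I.mul_mem_right _ ha)

lemma mem_unitSubgroup {R : Type*} [CommRing R] {I : Ideal R} {u : Rˣ} :
    u ∈ unitSubgroup I ↔ (u : R) - 1 ∈ I := Iff.rfl

lemma pow_mem_maxIdeal_pow_iff {R : Type*} [CommRing R] [IsDomain R]
    [IsDiscreteValuationRing R] {p m : ℕ} (hp : 0 < p) (x : R) :
    x ^ p ∈ (IsLocalRing.maximalIdeal R) ^ m ↔
      x ∈ (IsLocalRing.maximalIdeal R) ^ ((m + p - 1) / p) := by
  obtain ⟨ϖ, hϖ⟩ := IsDiscreteValuationRing.exists_irreducible R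
  have hspan := (IsDiscreteValuationRing.irreducible_iff_uniformizer ϖ).mp hϖ
  have hcd : ∀ n : ℕ, (m + p - 1) / p ≤ n ↔ m ≤ n * p := by
    intro n
    rw [Nat.div_le_iff_le_mul_add_pred hp, Nat.mul_comm p n]
    omega
  rw [hspan, Ideal.span_singleton_pow, Ideal.span_singleton_pow,
    Ideal.mem_span_singleton, Ideal.mem_span_singleton]
  rcases eq_or_ne x 0 with rfl | hx
  · simp [zero_pow hp.ne']
  · obtain ⟨n, u, rfl⟩ := IsDiscreteValuationRing.eq_unit_mul_pow_irreducible hx hϖ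
    rw [mul_pow, ← pow_mul]
    have hu : IsUnit ((u : R) ^ p) := (u.isUnit).pow p
    rw [hu.dvd_mul_left, u.isUnit.dvd_mul_left,
      pow_dvd_pow_iff hϖ.ne_zero hϖ.not_isUnit,
      pow_dvd_pow_iff hϖ.ne_zero hϖ.not_isUnit]
    rw [hcd n]

theorem stmt1 (p : ℕ) (hp : p.Prime) (R : Type*) [CommRing R] [IsDomain R]
    [IsDiscreteValuationRing R] [CharP R p] (m : ℕ) (hm : 1 ≤ m) :
    ∃ U : ℕ → Subgroup Rˣ,
      (∀ k : ℕ, ∀ u : Rˣ, u ∈ U k ↔ (u : R) - 1 ∈ (IsLocalRing.maximalIdeal R) ^ k) ∧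
      ∃ e : ((U 1) ⧸ ((U ((m + p - 1) / p)).subgroupOf (U 1))) ≃*
            (powMonoidHom (α := (U 1) ⧸ ((U m).subgroupOf (U 1))) p).range,
        ∀ u : (U 1 : Subgroup Rˣ),
          ((e (QuotientGroup.mk u) : ((U 1) ⧸ ((U m).subgroupOf (U 1)))))
            = (QuotientGroup.mk u : (U 1) ⧸ ((U m).subgroupOf (U 1))) ^ p := by
  haveI : Fact p.Prime := ⟨hp⟩
  set U : ℕ → Subgroup Rˣ := fun k => unitSubgroup ((IsLocalRing.maximalIdeal R) ^ k) with hU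
  refine ⟨U, fun k u => Iff.rfl, ?_⟩
  set c := (m + p - 1) / p with hc
  set N := (U m).subgroupOf (U 1) with hN
  set π := QuotientGroup.mk' N with hπ
  set φ := (powMonoidHom (α := (U 1) ⧸ N) p).comp π with hφ
  have hker : φ.ker = (U c).subgroupOf (U 1) := by
    ext u
    have h1 : φ u = QuotientGroup.mk (u ^ p) := by
      simp [hφ, powMonoidHom_apply, hπ]
    rw [MonoidHom.mem_ker, h1, QuotientGroup.eq_one_iff, hN, Subgroup.mem_subgroupOf,
      Subgroup.mem_subgroupOf]
    simp only [hU]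
    rw [mem_unitSubgroup, mem_unitSubgroup]
    have h2 : (((u ^ p : (U 1)) : Rˣ) : R) = ((u : Rˣ) : R) ^ p := by
      push_cast
      rfl
    have hchar : ((u : Rˣ) : R) ^ p - 1 = (((u : Rˣ) : R) - 1) ^ p := by
      rw [sub_pow_char, one_pow]
    rw [h2, hchar]
    exact pow_mem_maxIdeal_pow_iff hp.pos _
  have hrange : φ.range = (powMonoidHom (α := (U 1) ⧸ N) p).range := by
    rw [hφ, MonoidHom.range_comp, MonoidHom.range_eq_top_of_surjective π
      (QuotientGroup.mk'_surjective N), ← MonoidHom.range_eq_map]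
  refine ⟨((QuotientGroup.quotientMulEquivOfEq hker.symm).trans
      (QuotientGroup.quotientKerEquivRange φ)).trans (MulEquiv.subgroupCongr hrange), ?_⟩
  intro u
  rfl
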